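/- Let m > 0. For α > 0 let g_α : ℝ³ → ℝ be the Gaussian adiabatic cut-off g_α(p) = α^{3/2} · exp(−α‖p‖²). Then the second-order vacuum energy coefficient diverges in the adiabatic limit: ∫_{ℝ⁹} V_{g_α}(p₁,p₂,p₃) dp₁ dp₂ dp₃ → ∞ as α → ∞. -/

import Mathlib

open MeasureTheory

/-- Euclidean three-space. -/
abbrev R3 := EuclideanSpace ℝ (Fin 3)

/-- The one-particle energy `ω(p) = √(‖p‖² + m²)` for `p ∈ ℝ³`. -/
noncomputable def ω3 (m : ℝ) (p : R3) : ℝ := Real.sqrt (‖p‖ ^ 2 + m ^ 2)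

/-- The second-order vacuum integrand `V_g(p₁,p₂,p₃)` of the regularised `φ³`
theory on the noncommutative Minkowski space, with adiabatic cut-off `g`. -/
noncomputable def V (m : ℝ) (g : R3 → ℂ) (p : R3 × R3 × R3) : ℝ :=
  ‖g ((3 : ℝ)⁻¹ • (p.1 + p.2.1 + p.2.2))‖ ^ 2 *
    (Real.exp (-‖p.1 - (3 : ℝ)⁻¹ • (p.1 + p.2.1 + p.2.2)‖ ^ 2 -
        (ω3 m p.1 - (ω3 m p.1 + ω3 m p.2.1 + ω3 m p.2.2) / 3) ^ 2) *
      Real.exp (-‖p.2.1 - (3 : ℝ)⁻¹ • (p.1 + p.2.1 + p.2.2)‖ ^ 2 -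
        (ω3 m p.2.1 - (ω3 m p.1 + ω3 m p.2.1 + ω3 m p.2.2) / 3) ^ 2) *
      Real.exp (-‖p.2.2 - (3 : ℝ)⁻¹ • (p.1 + p.2.1 + p.2.2)‖ ^ 2 -
        (ω3 m p.2.2 - (ω3 m p.1 + ω3 m p.2.1 + ω3 m p.2.2) / 3) ^ 2)) /
    ((ω3 m p.1 + ω3 m p.2.1 + ω3 m p.2.2) * (ω3 m p.1 * ω3 m p.2.1 * ω3 m p.2.2))

/-- The Gaussian adiabatic cut-off `g_α(p) = α^{3/2} exp(−α‖p‖²)`, regarded as a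
complex-valued function. -/
noncomputable def gauss (α : ℝ) (p : R3) : ℂ :=
  ((α ^ ((3 : ℝ) / 2) * Real.exp (-α * ‖p‖ ^ 2) : ℝ) : ℂ)

lemma omega_ge (m : ℝ) (hm : 0 < m) (p : R3) : m ≤ ω3 m p := by
  rw [ω3, show ‖p‖ ^ 2 + m ^ 2 = m ^ 2 + ‖p‖ ^ 2 by ring]
  exact le_trans (le_of_eq (Real.sqrt_sq hm.le).symm)
    (Real.sqrt_le_sqrt (le_add_of_nonneg_right (by positivity)))

lemma omega_le (m : ℝ) {p : R3} {R : ℝ} (hp : ‖p‖ ≤ R) :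
    ω3 m p ≤ Real.sqrt (R ^ 2 + m ^ 2) := by
  refine Real.sqrt_le_sqrt ?_
  nlinarith [norm_nonneg p]

lemma paxis (a b c : R3) :
    ‖a - (3:ℝ)⁻¹ • (a+b+c)‖ ^ 2 + ‖b - (3:ℝ)⁻¹ • (a+b+c)‖ ^ 2
      + ‖c - (3:ℝ)⁻¹ • (a+b+c)‖ ^ 2 + 3 * ‖(3:ℝ)⁻¹ • (a+b+c)‖ ^ 2
      = ‖a‖ ^ 2 + ‖b‖ ^ 2 + ‖c‖ ^ 2 := by
  set s : R3 := (3:ℝ)⁻¹ • (a+b+c) with hs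
  have h3 : a + b + c = (3:ℝ) • s := by rw [hs, smul_smul]; norm_num
  have hi : (inner ℝ a s : ℝ) + inner ℝ b s + inner ℝ c s = 3 * ‖s‖ ^ 2 := by
    rw [← inner_add_left, ← inner_add_left, h3, real_inner_smul_left,
      real_inner_self_eq_norm_sq]
  have e1 := norm_sub_sq_real a s
  have e2 := norm_sub_sq_real b s
  have e3 := norm_sub_sq_real c s
  linarith

lemma int_g : Integrable (fun v : R3 => Real.exp (-‖v‖ ^ 2)) := by
  have h := (GaussianFourier.integrable_cexp_neg_mul_sq_norm_add (V := R3)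
    (b := 1) (by norm_num) 0 0).norm
  convert h using 2 with v
  simp [Complex.norm_exp, ← Complex.ofReal_pow]

lemma gauss_norm_sq (α : ℝ) (hα : 0 ≤ α) (p : R3) :
    ‖gauss α p‖ ^ 2 = α ^ 3 * Real.exp (-(2 * α) * ‖p‖ ^ 2) := by
  rw [gauss, Complex.norm_real, Real.norm_eq_abs, sq_abs, mul_pow, ← Real.exp_nat_mul,
    ← Real.rpow_natCast (α ^ ((3:ℝ)/2)) 2, ← Real.rpow_mul hα,
    show ((3:ℝ)/2 * ((2:ℕ):ℝ)) = ((3:ℕ):ℝ) by norm_num, Real.rpow_natCast]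
  ring_nf

lemma V_nonneg (m : ℝ) (g : R3 → ℂ) (p : R3 × R3 × R3) : 0 ≤ V m g p := by
  unfold V ω3
  positivity

lemma omega_cont (m : ℝ) : Continuous (ω3 m) := by
  unfold ω3; fun_prop

lemma V_cont (m : ℝ) (hm : 0 < m) (α : ℝ) : Continuous (V m (gauss α)) := by
  have hω := omega_cont m
  have hpos : ∀ p : R3, 0 < ω3 m p := fun p => by
    unfold ω3; positivity
  unfold V gauss
  apply Continuous.div
  · fun_prop
  · fun_prop
  · intro p
    have := hpos p.1; have := hpos p.2.1; have := hpos p.2.2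
    positivity

lemma V_le (m α : ℝ) (hm : 0 < m) (hα : (3:ℝ)/2 ≤ α) (p : R3 × R3 × R3) :
    V m (gauss α) p ≤ α ^ 3 / (3 * m ^ 4) *
      (Real.exp (-‖p.1‖ ^ 2) * (Real.exp (-‖p.2.1‖ ^ 2) * Real.exp (-‖p.2.2‖ ^ 2))) := by
  have h0 : (0:ℝ) ≤ α := by linarith
  have hm1 := omega_ge m hm p.1
  have hm2 := omega_ge m hm p.2.1
  have hm3 := omega_ge m hm p.2.2
  rw [V, gauss_norm_sq α h0]
  set s : R3 := (3:ℝ)⁻¹ • (p.1 + p.2.1 + p.2.2) with hs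
  have ha : 0 < ω3 m p.1 := lt_of_lt_of_le hm hm1
  have hb : 0 < ω3 m p.2.1 := lt_of_lt_of_le hm hm2
  have hc : 0 < ω3 m p.2.2 := lt_of_lt_of_le hm hm3
  have h1 : m * m ≤ ω3 m p.1 * ω3 m p.2.1 := mul_le_mul hm1 hm2 hm.le ha.le
  have h2 : m * m * m ≤ ω3 m p.1 * ω3 m p.2.1 * ω3 m p.2.2 :=
    mul_le_mul h1 hm3 hm.le (by positivity)
  have hsum : 3 * m ≤ ω3 m p.1 + ω3 m p.2.1 + ω3 m p.2.2 := by linarith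
  have hD : 3 * m ^ 4 ≤ (ω3 m p.1 + ω3 m p.2.1 + ω3 m p.2.2) *
      (ω3 m p.1 * ω3 m p.2.1 * ω3 m p.2.2) := by
    calc 3 * m ^ 4 = (3 * m) * (m * m * m) := by ring
    _ ≤ _ := mul_le_mul hsum h2 (by positivity) (by linarith)
  have hDpos : 0 < (ω3 m p.1 + ω3 m p.2.1 + ω3 m p.2.2) *
      (ω3 m p.1 * ω3 m p.2.1 * ω3 m p.2.2) := by positivity
  have key : Real.exp (-(2 * α) * ‖s‖ ^ 2) *
      (Real.exp (-‖p.1 - s‖ ^ 2 -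
          (ω3 m p.1 - (ω3 m p.1 + ω3 m p.2.1 + ω3 m p.2.2) / 3) ^ 2) *
        Real.exp (-‖p.2.1 - s‖ ^ 2 -
          (ω3 m p.2.1 - (ω3 m p.1 + ω3 m p.2.1 + ω3 m p.2.2) / 3) ^ 2) *
        Real.exp (-‖p.2.2 - s‖ ^ 2 -
          (ω3 m p.2.2 - (ω3 m p.1 + ω3 m p.2.1 + ω3 m p.2.2) / 3) ^ 2)) ≤
      Real.exp (-‖p.1‖ ^ 2) * (Real.exp (-‖p.2.1‖ ^ 2) * Real.exp (-‖p.2.2‖ ^ 2)) := by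
    simp only [← Real.exp_add]
    apply Real.exp_le_exp.mpr
    have hp := paxis p.1 p.2.1 p.2.2
    rw [← hs] at hp
    nlinarith [sq_nonneg (ω3 m p.1 - (ω3 m p.1 + ω3 m p.2.1 + ω3 m p.2.2) / 3),
      sq_nonneg (ω3 m p.2.1 - (ω3 m p.1 + ω3 m p.2.1 + ω3 m p.2.2) / 3),
      sq_nonneg (ω3 m p.2.2 - (ω3 m p.1 + ω3 m p.2.1 + ω3 m p.2.2) / 3),
      mul_nonneg (by linarith : (0:ℝ) ≤ 2 * α - 3) (sq_nonneg ‖s‖)]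
  calc α ^ 3 * Real.exp (-(2 * α) * ‖s‖ ^ 2) *
      (Real.exp (-‖p.1 - s‖ ^ 2 -
          (ω3 m p.1 - (ω3 m p.1 + ω3 m p.2.1 + ω3 m p.2.2) / 3) ^ 2) *
        Real.exp (-‖p.2.1 - s‖ ^ 2 -
          (ω3 m p.2.1 - (ω3 m p.1 + ω3 m p.2.1 + ω3 m p.2.2) / 3) ^ 2) *
        Real.exp (-‖p.2.2 - s‖ ^ 2 -
          (ω3 m p.2.2 - (ω3 m p.1 + ω3 m p.2.1 + ω3 m p.2.2) / 3) ^ 2)) /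
      ((ω3 m p.1 + ω3 m p.2.1 + ω3 m p.2.2) * (ω3 m p.1 * ω3 m p.2.1 * ω3 m p.2.2))
      ≤ α ^ 3 * (Real.exp (-‖p.1‖ ^ 2) *
          (Real.exp (-‖p.2.1‖ ^ 2) * Real.exp (-‖p.2.2‖ ^ 2))) / (3 * m ^ 4) := by
        apply div_le_div₀ (by positivity) ?_ (by positivity : (0:ℝ) < 3 * m ^ 4) hD
        rw [mul_assoc]
        exact mul_le_mul_of_nonneg_left key (by positivity)
    _ = α ^ 3 / (3 * m ^ 4) *
      (Real.exp (-‖p.1‖ ^ 2) * (Real.exp (-‖p.2.1‖ ^ 2) * Real.exp (-‖p.2.2‖ ^ 2))) := by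
        ring

lemma V_int (m : ℝ) (hm : 0 < m) (α : ℝ) (hα : (3:ℝ)/2 ≤ α) :
    Integrable (V m (gauss α)) := by
  have hg2 : Integrable (fun q : R3 × R3 => Real.exp (-‖q.1‖ ^ 2) * Real.exp (-‖q.2‖ ^ 2)) := by
    rw [show (volume : Measure (R3 × R3)) = Measure.prod volume volume from rfl]
    exact int_g.mul_prod int_g
  have hg3 : Integrable (fun p : R3 × R3 × R3 =>
      Real.exp (-‖p.1‖ ^ 2) * (Real.exp (-‖p.2.1‖ ^ 2) * Real.exp (-‖p.2.2‖ ^ 2))) := by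
    rw [show (volume : Measure (R3 × R3 × R3)) = Measure.prod volume volume from rfl]
    exact int_g.mul_prod hg2
  refine (hg3.const_mul (α ^ 3 / (3 * m ^ 4))).mono'
    (V_cont m hm α).aestronglyMeasurable ?_
  refine Filter.Eventually.of_forall fun p => ?_
  rw [Real.norm_eq_abs, abs_of_nonneg (V_nonneg m _ p)]
  exact V_le m α hm hα p

def Bset (r : ℝ) : Set (R3 × R3 × R3) :=
  {p | ‖p.2.1‖ ≤ 1 ∧ ‖p.2.2‖ ≤ 1 ∧ ‖p.1 + p.2.1 + p.2.2‖ ≤ r}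

lemma Bset_closed (r : ℝ) : IsClosed (Bset r) := by
  rw [Bset, Set.setOf_and, Set.setOf_and]
  exact (isClosed_le (by fun_prop) continuous_const).inter
    ((isClosed_le (by fun_prop) continuous_const).inter
      (isClosed_le (by fun_prop) continuous_const))

lemma volB (r : ℝ) (hr : 0 ≤ r) :
    volume (Bset r) = ENNReal.ofReal (r ^ 3) * (volume (Metric.ball (0:R3) 1) *
      (volume (Metric.closedBall (0:R3) 1) * volume (Metric.closedBall (0:R3) 1))) := by
  have hBm : MeasurableSet (Bset r) := (Bset_closed r).measurableSet
  set S : Set (R3 × R3) := Metric.closedBall (0:R3) 1 ×ˢ Metric.closedBall (0:R3) 1 with hS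
  have hSm : MeasurableSet S := (measurableSet_closedBall).prod
    (measurableSet_closedBall)
  rw [show (volume : Measure (R3 × R3 × R3)) = Measure.prod volume volume from rfl,
    Measure.prod_apply_symm hBm]
  have hslice : ∀ y : R3 × R3, (volume ((fun x => (x, y)) ⁻¹' Bset r))
      = S.indicator (fun _ => volume (Metric.closedBall (0:R3) r)) y := by
    intro y
    by_cases hy : y ∈ S
    · rw [Set.indicator_of_mem hy]
      obtain ⟨h1, h2⟩ := hy
      rw [mem_closedBall_zero_iff] at h1 h2
      have hpre : ((fun x => (x, y)) ⁻¹' Bset r) = Metric.closedBall (-(y.1 + y.2)) r := by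
        ext x
        simp only [Bset, Set.mem_preimage, Set.mem_setOf_eq, Metric.mem_closedBall,
          dist_eq_norm, sub_neg_eq_add, add_assoc, h1, h2, true_and]
      rw [hpre, Measure.addHaar_closedBall_center]
    · rw [Set.indicator_of_notMem hy]
      have hpre : ((fun x => (x, y)) ⁻¹' Bset r) = ∅ := by
        ext x
        simp only [Bset, Set.mem_preimage, Set.mem_setOf_eq, Set.mem_empty_iff_false,
          iff_false, not_and]
        intro h1 h2 _
        exact hy ⟨mem_closedBall_zero_iff.mpr h1, mem_closedBall_zero_iff.mpr h2⟩
      simp [hpre]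
  rw [lintegral_congr hslice, lintegral_indicator hSm, setLIntegral_const,
    Measure.addHaar_closedBall _ _ hr, hS,
    show (volume : Measure (R3 × R3)) = Measure.prod volume volume from rfl,
    Measure.prod_prod]
  simp only [finrank_euclideanSpace_fin]
  ring

lemma V_ge (m α : ℝ) (hm : 0 < m) (hα : 1 ≤ α) (p : R3 × R3 × R3)
    (hp : p ∈ Bset (Real.sqrt α)⁻¹) :
    Real.exp (-1) * Real.exp (-(25 + m ^ 2)) ^ 3 / (3 * (9 + m ^ 2) ^ 2) * α ^ 3
      ≤ V m (gauss α) p := by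
  have h0 : (0:ℝ) < α := by linarith
  have hsa : 1 ≤ Real.sqrt α := by
    rw [show (1:ℝ) = Real.sqrt 1 from (Real.sqrt_one).symm]
    exact Real.sqrt_le_sqrt hα
  have hspos : 0 < Real.sqrt α := by linarith
  have hr1 : (Real.sqrt α)⁻¹ ≤ 1 := by
    rw [inv_le_one_iff₀]; right; exact hsa
  obtain ⟨h2, h3, h1⟩ := hp
  have h1' : ‖p.1 + p.2.1 + p.2.2‖ ≤ 1 := le_trans h1 hr1
  have hP1 : ‖p.1‖ ≤ 3 := by
    have he : p.1 = ((p.1 + p.2.1 + p.2.2) - p.2.1) - p.2.2 := by abel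
    calc ‖p.1‖ = ‖((p.1 + p.2.1 + p.2.2) - p.2.1) - p.2.2‖ := by rw [← he]
      _ ≤ ‖(p.1 + p.2.1 + p.2.2) - p.2.1‖ + ‖p.2.2‖ := norm_sub_le _ _
      _ ≤ (‖p.1 + p.2.1 + p.2.2‖ + ‖p.2.1‖) + ‖p.2.2‖ := by
          gcongr; exact norm_sub_le _ _
      _ ≤ 3 := by linarith
  have hP2 : ‖p.2.1‖ ≤ 3 := by linarith
  have hP3 : ‖p.2.2‖ ≤ 3 := by linarith
  set s : R3 := (3:ℝ)⁻¹ • (p.1 + p.2.1 + p.2.2) with hs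
  have hsn : ‖s‖ ≤ 3⁻¹ * (Real.sqrt α)⁻¹ := by
    rw [hs, norm_smul, Real.norm_eq_abs]
    rw [abs_of_pos (by norm_num : (0:ℝ) < 3⁻¹)]
    gcongr
  have hsn1 : ‖s‖ ≤ 1 := by
    refine le_trans hsn ?_
    calc 3⁻¹ * (Real.sqrt α)⁻¹ ≤ 3⁻¹ * 1 := by gcongr
      _ ≤ 1 := by norm_num
  -- ω bounds
  set M : ℝ := Real.sqrt (9 + m ^ 2) with hM
  have hM2 : M ^ 2 = 9 + m ^ 2 := Real.sq_sqrt (by positivity)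
  have hM0 : 0 < M := Real.sqrt_pos.mpr (by positivity)
  have hω : ∀ q : R3, ‖q‖ ≤ 3 → ω3 m q ≤ M := fun q hq => by
    have h := omega_le m hq
    rwa [show (3:ℝ) ^ 2 + m ^ 2 = 9 + m ^ 2 by norm_num, ← hM] at h
  have hw1u : ω3 m p.1 ≤ M := hω p.1 hP1
  have hw2u : ω3 m p.2.1 ≤ M := hω p.2.1 hP2
  have hw3u : ω3 m p.2.2 ≤ M := hω p.2.2 hP3
  have hw1l := omega_ge m hm p.1
  have hw2l := omega_ge m hm p.2.1
  have hw3l := omega_ge m hm p.2.2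
  have hdsq : ∀ w : ℝ, m ≤ w → w ≤ M →
      (w - (ω3 m p.1 + ω3 m p.2.1 + ω3 m p.2.2) / 3) ^ 2 ≤ 9 + m ^ 2 := by
    intro w hwl hwu
    rw [← hM2]
    apply sq_le_sq' <;> nlinarith
  -- norm-squared bounds
  have hns : ∀ q : R3, ‖q‖ ≤ 3 → ‖q - s‖ ^ 2 ≤ 16 := by
    intro q hq
    have : ‖q - s‖ ≤ 4 := le_trans (norm_sub_le _ _) (by linarith)
    nlinarith [norm_nonneg (q - s)]
  -- exponential lower bounds
  have hE : ∀ q : R3, ‖q‖ ≤ 3 → ∀ w : ℝ, m ≤ w → w ≤ M →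
      Real.exp (-(25 + m ^ 2)) ≤
        Real.exp (-‖q - s‖ ^ 2 - (w - (ω3 m p.1 + ω3 m p.2.1 + ω3 m p.2.2) / 3) ^ 2) := by
    intro q hq w hwl hwu
    apply Real.exp_le_exp.mpr
    have := hns q hq
    have := hdsq w hwl hwu
    linarith
  -- gauss lower bound
  have hA : α ^ 3 * Real.exp (-1) ≤ ‖gauss α s‖ ^ 2 := by
    rw [gauss_norm_sq α h0.le]
    apply mul_le_mul_of_nonneg_left _ (by positivity)
    apply Real.exp_le_exp.mpr
    have hsq : ‖s‖ ^ 2 ≤ 1 / (9 * α) := by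
      have h9 : (3⁻¹ * (Real.sqrt α)⁻¹) ^ 2 = 1 / (9 * α) := by
        rw [mul_pow, ← Real.sqrt_inv]
        rw [Real.sq_sqrt (by positivity)]
        field_simp
        norm_num
      rw [← h9]
      exact pow_le_pow_left₀ (norm_nonneg s) hsn 2
    have : 2 * α * ‖s‖ ^ 2 ≤ 2 / 9 := by
      calc 2 * α * ‖s‖ ^ 2 ≤ 2 * α * (1 / (9 * α)) := by gcongr
        _ = 2 / 9 := by field_simp
    linarith
  -- denominator upper bound
  have hDpos : 0 < (ω3 m p.1 + ω3 m p.2.1 + ω3 m p.2.2) *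
      (ω3 m p.1 * ω3 m p.2.1 * ω3 m p.2.2) := by
    have ha : 0 < ω3 m p.1 := lt_of_lt_of_le hm hw1l
    have hb : 0 < ω3 m p.2.1 := lt_of_lt_of_le hm hw2l
    have hc : 0 < ω3 m p.2.2 := lt_of_lt_of_le hm hw3l
    positivity
  have hDle : (ω3 m p.1 + ω3 m p.2.1 + ω3 m p.2.2) *
      (ω3 m p.1 * ω3 m p.2.1 * ω3 m p.2.2) ≤ 3 * (9 + m ^ 2) ^ 2 := by
    have ha : 0 < ω3 m p.1 := lt_of_lt_of_le hm hw1l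
    have hb : 0 < ω3 m p.2.1 := lt_of_lt_of_le hm hw2l
    have hc : 0 < ω3 m p.2.2 := lt_of_lt_of_le hm hw3l
    have hp1 : ω3 m p.1 * ω3 m p.2.1 ≤ M * M := mul_le_mul hw1u hw2u hb.le hM0.le
    have hp2 : ω3 m p.1 * ω3 m p.2.1 * ω3 m p.2.2 ≤ M * M * M :=
      mul_le_mul hp1 hw3u hc.le (by positivity)
    have hsum : ω3 m p.1 + ω3 m p.2.1 + ω3 m p.2.2 ≤ 3 * M := by linarith
    calc (ω3 m p.1 + ω3 m p.2.1 + ω3 m p.2.2) * (ω3 m p.1 * ω3 m p.2.1 * ω3 m p.2.2)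
        ≤ (3 * M) * (M * M * M) := mul_le_mul hsum hp2 (by positivity) (by positivity)
      _ = 3 * (M ^ 2) ^ 2 := by ring
      _ = 3 * (9 + m ^ 2) ^ 2 := by rw [hM2]
  -- numerator lower bound
  rw [V, ← hs]
  have hN : (α ^ 3 * Real.exp (-1)) *
      (Real.exp (-(25 + m ^ 2)) * Real.exp (-(25 + m ^ 2)) * Real.exp (-(25 + m ^ 2)))
      ≤ ‖gauss α s‖ ^ 2 *
        (Real.exp (-‖p.1 - s‖ ^ 2 -
            (ω3 m p.1 - (ω3 m p.1 + ω3 m p.2.1 + ω3 m p.2.2) / 3) ^ 2) *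
          Real.exp (-‖p.2.1 - s‖ ^ 2 -
            (ω3 m p.2.1 - (ω3 m p.1 + ω3 m p.2.1 + ω3 m p.2.2) / 3) ^ 2) *
          Real.exp (-‖p.2.2 - s‖ ^ 2 -
            (ω3 m p.2.2 - (ω3 m p.1 + ω3 m p.2.1 + ω3 m p.2.2) / 3) ^ 2)) := by
    apply mul_le_mul hA _ (by positivity) (by positivity)
    exact mul_le_mul (mul_le_mul (hE p.1 hP1 _ hw1l hw1u) (hE p.2.1 hP2 _ hw2l hw2u)
        (by positivity) (by positivity))
      (hE p.2.2 hP3 _ hw3l hw3u) (by positivity) (by positivity)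
  calc Real.exp (-1) * Real.exp (-(25 + m ^ 2)) ^ 3 / (3 * (9 + m ^ 2) ^ 2) * α ^ 3
      = (α ^ 3 * Real.exp (-1)) *
        (Real.exp (-(25 + m ^ 2)) * Real.exp (-(25 + m ^ 2)) * Real.exp (-(25 + m ^ 2)))
        / (3 * (9 + m ^ 2) ^ 2) := by ring
    _ ≤ _ := by
        apply div_le_div₀ (by positivity) hN hDpos hDle

theorem stmt17 (m : ℝ) (hm : 0 < m) :
    Filter.Tendsto (fun α : ℝ => ∫ p : R3 × R3 × R3, V m (gauss α) p)
      Filter.atTop Filter.atTop := by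
  set c : ℝ := (volume (Metric.ball (0:R3) 1) *
      (volume (Metric.closedBall (0:R3) 1) * volume (Metric.closedBall (0:R3) 1))).toReal
    with hc
  have hcpos : 0 < c := by
    rw [hc]
    apply ENNReal.toReal_pos
    · exact mul_ne_zero (Metric.measure_ball_pos _ _ one_pos).ne'
        (mul_ne_zero (Metric.measure_closedBall_pos _ _ one_pos).ne'
          (Metric.measure_closedBall_pos _ _ one_pos).ne')
    · exact ENNReal.mul_ne_top measure_ball_lt_top.ne
        (ENNReal.mul_ne_top measure_closedBall_lt_top.ne measure_closedBall_lt_top.ne)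
  set K : ℝ := Real.exp (-1) * Real.exp (-(25 + m ^ 2)) ^ 3 / (3 * (9 + m ^ 2) ^ 2) with hK
  have hKpos : 0 < K := by rw [hK]; positivity
  have hL : Filter.Tendsto (fun α : ℝ => (K * c) * α ^ ((3:ℝ)/2))
      Filter.atTop Filter.atTop :=
    (tendsto_rpow_atTop (by norm_num)).const_mul_atTop (by positivity)
  apply Filter.tendsto_atTop_mono' _ _ hL
  filter_upwards [Filter.eventually_ge_atTop (2:ℝ)] with α hα2
  have h0 : (0:ℝ) < α := by linarith
  have hsq : Real.sqrt α ^ 2 = α := Real.sq_sqrt h0.le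
  have hspos : 0 < Real.sqrt α := Real.sqrt_pos.mpr h0
  set r : ℝ := (Real.sqrt α)⁻¹ with hr
  have hr0 : (0:ℝ) ≤ r := by positivity
  have hint := V_int m hm α (by linarith)
  have hvol := volB r hr0
  have hBm := (Bset_closed r).measurableSet
  have hfin : volume (Bset r) ≠ ⊤ := by
    rw [hvol]
    exact ENNReal.mul_ne_top ENNReal.ofReal_ne_top
      (ENNReal.mul_ne_top measure_ball_lt_top.ne
        (ENNReal.mul_ne_top measure_closedBall_lt_top.ne measure_closedBall_lt_top.ne))
  have hvolR : (volume (Bset r)).toReal = r ^ 3 * c := by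
    rw [hvol, ENNReal.toReal_mul, ENNReal.toReal_ofReal (by positivity), hc]
  have step1 : (K * α ^ 3) * (volume (Bset r)).toReal ≤ ∫ p in Bset r, V m (gauss α) p :=
    setIntegral_ge_of_const_le_real hBm hfin
      (fun p hp => by
        have := V_ge m α hm (by linarith) p hp
        rw [← hK] at this
        linarith)
      hint.integrableOn
  have step2 : ∫ p in Bset r, V m (gauss α) p ≤ ∫ p, V m (gauss α) p :=
    setIntegral_le_integral hint (Filter.Eventually.of_forall (V_nonneg m _))
  have key : (K * c) * α ^ ((3:ℝ)/2) = (K * α ^ 3) * (volume (Bset r)).toReal := by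
    rw [hvolR, hr]
    have h32 : α ^ ((3:ℝ)/2) = Real.sqrt α ^ 3 := by
      rw [Real.sqrt_eq_rpow, ← Real.rpow_natCast (α ^ ((1:ℝ)/2)) 3, ← Real.rpow_mul h0.le]
      norm_num
    have h6 : α ^ 3 = Real.sqrt α ^ 6 := by
      calc α ^ 3 = (Real.sqrt α ^ 2) ^ 3 := by rw [hsq]
        _ = Real.sqrt α ^ 6 := by ring
    rw [h32, h6]
    field_simp
  rw [key]
  exact le_trans step1 step2
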